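/- Under the parabolic Cayley transform w ↦ (2w − i)/(iσ̆w + 2) in dual numbers (i² = 0), the inverse image computation shows that the invariant distance between two points u₁+iv₁ and u₂+iv₂ in the disc model is sin_σ̆^{-1}(2|u₂−u₁| / (2√((1+2v₁+σ̆u₁²)(1+2v₂+σ̆u₂²)))), where sin_σ̆^{-1} is arcsinh, doubling, or arcsin according as σ̆ = −1, 0, 1. In particular the expression |u₂−u₁|/√((1+2v₁+σ̆u₁²)(1+2v₂+σ̆u₂²)) is invariant under conjugates of SL_2(ℝ) Möbius maps by the Cayley transform. -/

import Mathlib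

open TrivSqZeroExt in
/-- A dual number `u + εv`. -/
noncomputable def dpt (u v : ℝ) : DualNumber ℝ := inl u + inr v

/-- The parabolic Cayley transform `w ↦ (2w − ε)/(εσ̆w + 2)` in dual numbers. -/
noncomputable def dCayley (σ : ℝ) (w : DualNumber ℝ) : DualNumber ℝ :=
  (2 * w - DualNumber.eps) * Ring.inverse (DualNumber.eps * TrivSqZeroExt.inl σ * w + 2)

/-- The inverse of the parabolic Cayley transform, `z ↦ (2z + ε)/(−εσ̆z + 2)`. -/
noncomputable def dCayleyInv (σ : ℝ) (z : DualNumber ℝ) : DualNumber ℝ :=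
  (2 * z + DualNumber.eps) * Ring.inverse (-(DualNumber.eps * TrivSqZeroExt.inl σ * z) + 2)

/-- The dual-number Möbius transformation associated with `[[a,b],[c,d]]`. -/
noncomputable def dMoebius (a b c d : ℝ) (w : DualNumber ℝ) : DualNumber ℝ :=
  (TrivSqZeroExt.inl a * w + TrivSqZeroExt.inl b) *
    Ring.inverse (TrivSqZeroExt.inl c * w + TrivSqZeroExt.inl d)

/-- `sin_σ̆⁻¹`: arcsinh, doubling, or arcsin according as `σ̆ = −1, 0, 1`. -/
noncomputable def sinInv (σ t : ℝ) : ℝ :=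
  if σ = -1 then Real.arsinh t else if σ = 0 then 2 * t else Real.arcsin t

/-- The disc-model expression `|u₂−u₁|/√((1+2v₁+σ̆u₁²)(1+2v₂+σ̆u₂²))`. -/
noncomputable def discExpr (σ u₁ v₁ u₂ v₂ : ℝ) : ℝ :=
  |u₂ - u₁| / Real.sqrt ((1 + 2*v₁ + σ*u₁^2) * (1 + 2*v₂ + σ*u₂^2))

section AuxLemmas
open TrivSqZeroExt
lemma dpt_fst (u v : ℝ) : fst (dpt u v) = u := by simp [dpt]
lemma dpt_snd (u v : ℝ) : snd (dpt u v) = v := by simp [dpt]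

lemma dpt_mul (a b c d : ℝ) : dpt a b * dpt c d = dpt (a*c) (a*d + c*b) := by
  ext <;> simp [dpt] <;> ring

lemma ringInverse_dpt (a b : ℝ) (ha : a ≠ 0) :
    Ring.inverse (dpt a b) = dpt a⁻¹ (-(b / a^2)) := by
  have h : dpt a b * dpt a⁻¹ (-(b / a^2)) = 1 := by
    rw [dpt_mul]
    ext <;> simp [dpt] <;> field_simp <;> ring
  have hu : IsUnit (dpt a b) := IsUnit.of_mul_eq_one _ h
  rw [← hu.unit_spec, Ring.inverse_unit]
  exact Units.inv_eq_of_mul_eq_one_right (by rw [hu.unit_spec]; exact h)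

lemma dpt_add (a b c d : ℝ) : dpt a b + dpt c d = dpt (a+c) (b+d) := by
  ext <;> simp [dpt]
lemma dpt_neg (a b : ℝ) : -dpt a b = dpt (-a) (-b) := by ext <;> simp [dpt]
lemma eps_eq : (DualNumber.eps : DualNumber ℝ) = dpt 0 1 := by ext <;> simp [dpt]
lemma inl_eq (a : ℝ) : (inl a : DualNumber ℝ) = dpt a 0 := by ext <;> simp [dpt]
lemma two_eq : (2 : DualNumber ℝ) = dpt 2 0 := by
  rw [show (2 : DualNumber ℝ) = inl 2 from (map_ofNat (TrivSqZeroExt.inlHom ℝ ℝ) 2).symm, inl_eq]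
lemma dpt_ext_iff (a b c d : ℝ) : dpt a b = dpt c d ↔ a = c ∧ b = d := by
  constructor
  · intro h
    exact ⟨by rw [← dpt_fst a b, h, dpt_fst], by rw [← dpt_snd a b, h, dpt_snd]⟩
  · rintro ⟨rfl, rfl⟩; rfl

lemma dCayley_dpt (σ U V : ℝ) :
    dCayley σ (dpt U V) = dpt U (V - 1/2 - σ*U^2/2) := by
  rw [dCayley, eps_eq, inl_eq, two_eq, sub_eq_add_neg, dpt_neg, dpt_mul, dpt_mul, dpt_mul,
    dpt_add, dpt_add, ringInverse_dpt _ _ (by norm_num), dpt_mul, dpt_ext_iff]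
  constructor <;> field_simp <;> ring

lemma dCayleyInv_dpt (σ u v : ℝ) :
    dCayleyInv σ (dpt u v) = dpt u ((1 + 2*v + σ*u^2)/2) := by
  rw [dCayleyInv, eps_eq, inl_eq, two_eq, dpt_mul, dpt_mul, dpt_mul, dpt_neg,
    dpt_add, dpt_add, ringInverse_dpt _ _ (by norm_num), dpt_mul, dpt_ext_iff]
  constructor <;> field_simp <;> ring

lemma dMoebius_dpt (a b c d U V : ℝ) (h : c*U + d ≠ 0) (hdet : a*d - b*c = 1) :
    dMoebius a b c d (dpt U V) = dpt ((a*U+b)/(c*U+d)) (V/(c*U+d)^2) := by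
  rw [dMoebius, inl_eq, inl_eq, inl_eq, inl_eq, dpt_mul, dpt_mul, dpt_add, dpt_add,
    ringInverse_dpt _ _ (by simpa using h), dpt_mul, dpt_ext_iff]
  constructor
  · field_simp
  · field_simp
    linear_combination V*hdet/(U*c+d)^2


lemma isUnit_aux (c d u v : ℝ) (h : IsUnit (inl c * dpt u v + (inl d : DualNumber ℝ))) :
    c * u + d ≠ 0 := by
  rw [inl_eq, inl_eq, dpt_mul, dpt_add] at h
  rw [TrivSqZeroExt.isUnit_iff_isUnit_fst, dpt_fst, isUnit_iff_ne_zero] at h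
  simpa using h


end AuxLemmas

open TrivSqZeroExt in
/-- Under the parabolic Cayley transform, the half-plane invariant distance
`sin_σ̆⁻¹(|U₂−U₁|/(2√(V₁V₂)))` becomes
`sin_σ̆⁻¹(2|u₂−u₁|/(2√((1+2v₁+σ̆u₁²)(1+2v₂+σ̆u₂²))))` in the disc model; in particular
the expression `|u₂−u₁|/√((1+2v₁+σ̆u₁²)(1+2v₂+σ̆u₂²))` is invariant under conjugates of
SL₂(ℝ) Möbius maps by the Cayley transform. -/

theorem parabolic_cayley_distance (σ : ℝ) (hσ : σ = -1 ∨ σ = 0 ∨ σ = 1) :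
    (∀ U₁ V₁ U₂ V₂ u₁ v₁ u₂ v₂ : ℝ, 0 < V₁ → 0 < V₂ →
      dCayley σ (dpt U₁ V₁) = dpt u₁ v₁ → dCayley σ (dpt U₂ V₂) = dpt u₂ v₂ →
      sinInv σ (|U₂ - U₁| / (2 * Real.sqrt (V₁ * V₂)))
        = sinInv σ (2 * |u₂ - u₁| /
            (2 * Real.sqrt ((1 + 2*v₁ + σ*u₁^2) * (1 + 2*v₂ + σ*u₂^2))))) ∧
    (∀ a b c d : ℝ, a * d - b * c = 1 → ∀ u₁ v₁ u₂ v₂ : ℝ,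
      0 < 1 + 2*v₁ + σ*u₁^2 → 0 < 1 + 2*v₂ + σ*u₂^2 →
      IsUnit (inl c * dCayleyInv σ (dpt u₁ v₁) + (inl d : DualNumber ℝ)) →
      IsUnit (inl c * dCayleyInv σ (dpt u₂ v₂) + (inl d : DualNumber ℝ)) →
      discExpr σ
        (fst (dCayley σ (dMoebius a b c d (dCayleyInv σ (dpt u₁ v₁)))))
        (snd (dCayley σ (dMoebius a b c d (dCayleyInv σ (dpt u₁ v₁)))))
        (fst (dCayley σ (dMoebius a b c d (dCayleyInv σ (dpt u₂ v₂)))))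
        (snd (dCayley σ (dMoebius a b c d (dCayleyInv σ (dpt u₂ v₂)))))
      = discExpr σ u₁ v₁ u₂ v₂) := by
  constructor
  · intro U₁ V₁ U₂ V₂ u₁ v₁ u₂ v₂ hV₁ hV₂ h1 h2
    rw [dCayley_dpt, dpt_ext_iff] at h1 h2
    obtain ⟨rfl, rfl⟩ := h1
    obtain ⟨rfl, rfl⟩ := h2
    congr 1
    have e1 : 1 + 2*(V₁ - 1/2 - σ*U₁^2/2) + σ*U₁^2 = 2*V₁ := by ring
    have e2 : 1 + 2*(V₂ - 1/2 - σ*U₂^2/2) + σ*U₂^2 = 2*V₂ := by ring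
    rw [e1, e2, show 2*V₁*(2*V₂) = 4*(V₁*V₂) by ring,
      Real.sqrt_mul (by norm_num : (0:ℝ) ≤ 4),
      show Real.sqrt 4 = 2 by rw [show (4:ℝ) = 2^2 by norm_num, Real.sqrt_sq (by norm_num)]]
    rw [mul_div_mul_left _ _ (by norm_num : (2:ℝ) ≠ 0)]
  · intro a b c d hdet u₁ v₁ u₂ v₂ h1 h2 hu1 hu2
    rw [dCayleyInv_dpt] at hu1 hu2
    have hp : c * u₁ + d ≠ 0 := isUnit_aux _ _ _ _ hu1
    have hq : c * u₂ + d ≠ 0 := isUnit_aux _ _ _ _ hu2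
    rw [dCayleyInv_dpt, dCayleyInv_dpt, dMoebius_dpt a b c d _ _ hp hdet,
      dMoebius_dpt a b c d _ _ hq hdet, dCayley_dpt, dCayley_dpt,
      dpt_fst, dpt_snd, dpt_fst, dpt_snd]
    set A₁ : ℝ := (a*u₁+b)/(c*u₁+d) with hA₁
    set A₂ : ℝ := (a*u₂+b)/(c*u₂+d) with hA₂
    set W₁ : ℝ := 1 + 2*v₁ + σ*u₁^2 with hW₁
    set W₂ : ℝ := 1 + 2*v₂ + σ*u₂^2 with hW₂
    rw [discExpr, discExpr]
    have e1 : 1 + 2*(W₁/2/(c*u₁+d)^2 - 1/2 - σ*A₁^2/2) + σ*A₁^2 = W₁/(c*u₁+d)^2 := by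
      field_simp
      ring
    have e2 : 1 + 2*(W₂/2/(c*u₂+d)^2 - 1/2 - σ*A₂^2/2) + σ*A₂^2 = W₂/(c*u₂+d)^2 := by
      field_simp
      ring
    rw [e1, e2]
    have eA : A₂ - A₁ = (u₂ - u₁)/((c*u₁+d)*(c*u₂+d)) := by
      rw [hA₁, hA₂, div_sub_div _ _ hq hp,
        show (c*u₂+d)*(c*u₁+d) = (c*u₁+d)*(c*u₂+d) by ring]
      congr 1
      linear_combination (u₂ - u₁) * hdet
    have eW : W₁/(c*u₁+d)^2 * (W₂/(c*u₂+d)^2) = (W₁*W₂)/((c*u₁+d)*(c*u₂+d))^2 := by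
      field_simp
    have hpq : (c*u₁+d)*(c*u₂+d) ≠ 0 := mul_ne_zero hp hq
    have hW : (0:ℝ) < Real.sqrt (W₁*W₂) := Real.sqrt_pos.mpr (mul_pos h1 h2)
    rw [eA, eW, Real.sqrt_div (le_of_lt (mul_pos h1 h2)), Real.sqrt_sq_eq_abs,
      abs_div, div_div_div_cancel_right₀]
    · exact abs_ne_zero.mpr hpq
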